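/- Let r ∈ [0, 1/2] and let (X_i)_{i≥1} be i.i.d. random variables with P(X_i = 1) = P(X_i = −1) = r and P(X_i = 0) = 1 − 2r; set S_0 = 0, S_n = X_1 + ⋯ + X_n and M_n = max_{0 ≤ i ≤ n} S_i. Then for every n, P(M_n = 0) = P(S_n ∈ {0, −1}); equivalently, the probability that all the partial sums S_1, …, S_n are ≤ 0 equals P(S_n = 0) + P(S_n = −1). -/

import Mathlib

open MeasureTheory ProbabilityTheory
open scoped ENNReal

namespace LazyWalk


def psum (n : ℕ) (x : Fin n → ℤ) (j : ℕ) : ℤ :=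
  ∑ i : Fin n, if (i : ℕ) < j then x i else 0

open scoped Classical in
/-- reflection after the first passage at level 1 -/
noncomputable def phi (n : ℕ) (x : Fin n → ℤ) : Fin n → ℤ :=
  if hx : ∃ j, psum n x j = 1 then
    fun i => if (i : ℕ) < Nat.find hx then x i else - x i
  else x

lemma phi_eq (n : ℕ) (x : Fin n → ℤ) (hx : ∃ j, psum n x j = 1) :
    phi n x = fun i : Fin n => if (i : ℕ) < Nat.find hx then x i else - x i := by
  unfold phi
  rw [dif_pos hx]

lemma psum_phi (n : ℕ) (x : Fin n → ℤ) (hx : ∃ j, psum n x j = 1) (j : ℕ) :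
    psum n (phi n x) j = 2 * psum n x (min j (Nat.find hx)) - psum n x j := by
  rw [phi_eq n x hx]
  unfold psum
  rw [Finset.mul_sum, ← Finset.sum_sub_distrib]
  refine Finset.sum_congr rfl fun i _ => ?_
  beta_reduce
  split_ifs <;> omega


lemma psum_stable (n : ℕ) (x : Fin n → ℤ) {j : ℕ} (hj : n ≤ j) :
    psum n x j = psum n x n := by
  unfold psum
  refine Finset.sum_congr rfl fun i _ => ?_
  have h1 : (i : ℕ) < j := lt_of_lt_of_le i.isLt hj
  simp [h1, i.isLt]

lemma find_le (n : ℕ) (x : Fin n → ℤ) (hx : ∃ j, psum n x j = 1) :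
    Nat.find hx ≤ n := by
  by_contra h
  push_neg at h
  have h1 : psum n x (Nat.find hx) = 1 := Nat.find_spec hx
  rw [psum_stable n x (le_of_lt h)] at h1
  exact Nat.find_min hx h h1

lemma phi_cases (n : ℕ) (x : Fin n → ℤ) (i : Fin n) :
    phi n x i = x i ∨ phi n x i = - x i := by
  unfold phi
  split_ifs with hx
  · beta_reduce; split_ifs
    · exact Or.inl rfl
    · exact Or.inr rfl
  · exact Or.inl rfl

lemma phi_hit (n : ℕ) (x : Fin n → ℤ) (hx : ∃ j, psum n x j = 1) :
    ∃ j, psum n (phi n x) j = 1 := by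
  refine ⟨Nat.find hx, ?_⟩
  rw [psum_phi n x hx, min_self, Nat.find_spec hx]
  ring

lemma phi_find (n : ℕ) (x : Fin n → ℤ) (hx : ∃ j, psum n x j = 1) :
    Nat.find (phi_hit n x hx) = Nat.find hx := by
  rw [Nat.find_eq_iff]
  constructor
  · rw [psum_phi n x hx, min_self, Nat.find_spec hx]; ring
  · intro j hj
    rw [psum_phi n x hx, min_eq_left (le_of_lt hj)]
    have := Nat.find_min hx hj
    omega

lemma phi_invol (n : ℕ) (x : Fin n → ℤ) (hx : ∃ j, psum n x j = 1) :
    phi n (phi n x) = x := by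
  have hy := phi_hit n x hx
  rw [phi_eq n (phi n x) hy]
  have hf : Nat.find hy = Nat.find hx := phi_find n x hx
  funext i
  rw [hf, phi_eq n x hx]
  beta_reduce
  split_ifs <;> simp

lemma psum_phi_last (n : ℕ) (x : Fin n → ℤ) (hx : ∃ j, psum n x j = 1) :
    psum n (phi n x) n = 2 - psum n x n := by
  rw [psum_phi n x hx, min_eq_right (find_le n x hx), Nat.find_spec hx]
  ring

lemma psum_succ (n : ℕ) (x : Fin n → ℤ) {j : ℕ} (hj : j < n) :
    psum n x (j + 1) = psum n x j + x ⟨j, hj⟩ := by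
  unfold psum
  have key : ∀ i : Fin n, (if (i : ℕ) < j + 1 then x i else 0)
      = (if (i : ℕ) < j then x i else 0) + (if i = ⟨j, hj⟩ then x i else 0) := by
    intro i
    rcases eq_or_ne i ⟨j, hj⟩ with h | h
    · subst h; simp
    · have hne : (i : ℕ) ≠ j := fun hc => h (Fin.ext hc)
      simp only [if_neg h]
      split_ifs <;> omega
  rw [Finset.sum_congr rfl fun i _ => key i, Finset.sum_add_distrib,
    Finset.sum_ite_eq' Finset.univ]
  simp

lemma psum_zero (n : ℕ) (x : Fin n → ℤ) : psum n x 0 = 0 := by simp [psum]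

/-- first passage: if the partial sums ever reach `≥ 1` and steps are `≤ 1`,
then some partial sum equals `1`. -/
lemma exists_hit (n : ℕ) (x : Fin n → ℤ) (hb : ∀ i, x i ≤ 1)
    (h : ∃ j, 1 ≤ psum n x j) : ∃ j, psum n x j = 1 := by
  classical
  have hspec := Nat.find_spec h
  set j := Nat.find h with hjdef
  have hj0 : j ≠ 0 := by
    intro h0
    rw [h0, psum_zero] at hspec
    omega
  obtain ⟨k, hk⟩ : ∃ k, j = k + 1 := ⟨j - 1, by omega⟩
  have hkmin : ¬ (1 ≤ psum n x k) := Nat.find_min h (by omega)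
  have hkn : k < n := by
    by_contra hkn
    push_neg at hkn
    rw [hk, psum_stable n x (by omega), ← psum_stable n x hkn] at hspec
    omega
  rw [hk, psum_succ n x hkn] at hspec
  have := hb ⟨k, hkn⟩
  exact ⟨k + 1, by rw [psum_succ n x hkn]; omega⟩

lemma psum_neg (n : ℕ) (x : Fin n → ℤ) (j : ℕ) :
    psum n (fun i => - x i) j = - psum n x j := by
  unfold psum
  rw [← Finset.sum_neg_distrib]
  refine Finset.sum_congr rfl fun i _ => ?_
  split_ifs <;> simp

open scoped Classical in
theorem key (n : ℕ) (w : ℤ → ℝ≥0∞) (hw : ∀ k : ℤ, w (-k) = w k) (hw' : ∀ k, w k ≠ ⊤) :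
    ∑ x ∈ (Fintype.piFinset fun _ : Fin n => ({-1, 0, 1} : Finset ℤ)).filter
        (fun x => ∀ j ≤ n, psum n x j ≤ 0), ∏ i, w (x i)
    = ∑ x ∈ (Fintype.piFinset fun _ : Fin n => ({-1, 0, 1} : Finset ℤ)).filter
        (fun x => psum n x n = 0), ∏ i, w (x i)
      + ∑ x ∈ (Fintype.piFinset fun _ : Fin n => ({-1, 0, 1} : Finset ℤ)).filter
        (fun x => psum n x n = -1), ∏ i, w (x i) := by
  set E : Finset (Fin n → ℤ) := Fintype.piFinset fun _ : Fin n => ({-1, 0, 1} : Finset ℤ)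
    with hE
  set W : (Fin n → ℤ) → ℝ≥0∞ := fun x => ∏ i, w (x i) with hW
  -- basic facts about membership in E
  have hmemE : ∀ x : Fin n → ℤ, x ∈ E ↔ ∀ i, x i = -1 ∨ x i = 0 ∨ x i = 1 := by
    intro x
    rw [hE, Fintype.mem_piFinset]
    simp [Finset.mem_insert]
  have hble : ∀ x ∈ E, ∀ i : Fin n, x i ≤ 1 := by
    intro x hx i
    rcases (hmemE x).1 hx i with h | h | h <;> omega
  have hnegE : ∀ x ∈ E, (fun i => - x i) ∈ E := by
    intro x hx
    rw [hmemE] at hx ⊢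
    intro i
    rcases hx i with h | h | h <;> simp [h]
  have hphiE : ∀ x ∈ E, phi n x ∈ E := by
    intro x hx
    rw [hmemE] at hx ⊢
    intro i
    rcases phi_cases n x i with h | h <;> rcases hx i with h' | h' | h' <;> simp [h, h']
  have hWphi : ∀ x : Fin n → ℤ, W (phi n x) = W x := by
    intro x
    refine Finset.prod_congr rfl fun i _ => ?_
    rcases phi_cases n x i with h | h <;> rw [h]
    exact hw (x i)
  have hWneg : ∀ x : Fin n → ℤ, W (fun i => - x i) = W x := by
    intro x
    exact Finset.prod_congr rfl fun i _ => hw (x i)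
  have hWne : ∀ s : Finset (Fin n → ℤ), ∑ x ∈ s, W x ≠ ⊤ := by
    intro s
    refine (ENNReal.sum_lt_top.2 fun x _ => ?_).ne
    exact ENNReal.prod_lt_top fun i _ => (hw' (x i)).lt_top
  -- hitting iff not all ≤ 0, for x ∈ E
  have hity : ∀ x ∈ E, (¬ ∀ j ≤ n, psum n x j ≤ 0) ↔ (∃ j, psum n x j = 1) := by
    intro x hx
    constructor
    · intro h
      push_neg at h
      obtain ⟨j, _, hj⟩ := h
      exact exists_hit n x (hble x hx) ⟨j, by omega⟩
    · rintro ⟨j, hj⟩ h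
      rcases le_or_gt j n with hjn | hjn
      · have := h j hjn
        omega
      · rw [psum_stable n x hjn.le] at hj
        have := h n le_rfl
        omega
  -- sums over E split by the "all ≤ 0" predicate
  have split1 : ∑ x ∈ E, W x
      = ∑ x ∈ E.filter (fun x => ∀ j ≤ n, psum n x j ≤ 0), W x
        + ∑ x ∈ E.filter (fun x => ∃ j, psum n x j = 1), W x := by
    rw [← Finset.sum_filter_add_sum_filter_not E (fun x => ∀ j ≤ n, psum n x j ≤ 0) W]
    congr 1
    exact Finset.sum_congr (Finset.filter_congr fun x hx => by rw [← hity x hx]) fun _ _ => rfl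
  -- sums over E split by final value
  have split2 : ∑ x ∈ E, W x
      = ∑ x ∈ E.filter (fun x => psum n x n = 0), W x
        + ∑ x ∈ E.filter (fun x => psum n x n = -1), W x
        + ∑ x ∈ E.filter (fun x => 1 ≤ psum n x n ∨ psum n x n ≤ -2), W x := by
    rw [← Finset.sum_filter_add_sum_filter_not E (fun x => psum n x n = 0) W,
      ← Finset.sum_filter_add_sum_filter_not (E.filter fun x => ¬ psum n x n = 0)
        (fun x => psum n x n = -1) W, Finset.filter_filter, Finset.filter_filter, add_assoc]
    congr 2
    · exact Finset.sum_congr (Finset.filter_congr fun x _ => by constructor <;> intro h <;> omega)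
        fun _ _ => rfl
    · exact Finset.sum_congr (Finset.filter_congr fun x _ => by constructor <;> intro h <;> omega)
        fun _ _ => rfl
  -- reflection: the hitting sum equals the tail sum
  have reflect : ∑ x ∈ E.filter (fun x => ∃ j, psum n x j = 1), W x
      = ∑ x ∈ E.filter (fun x => 1 ≤ psum n x n ∨ psum n x n ≤ -2), W x := by
    rw [← Finset.sum_filter_add_sum_filter_not (E.filter fun x => ∃ j, psum n x j = 1)
        (fun x => 1 ≤ psum n x n) W,
      ← Finset.sum_filter_add_sum_filter_not
        (E.filter fun x => 1 ≤ psum n x n ∨ psum n x n ≤ -2)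
        (fun x => 1 ≤ psum n x n) W,
      Finset.filter_filter, Finset.filter_filter, Finset.filter_filter, Finset.filter_filter]
    congr 1
    · refine Finset.sum_congr (Finset.filter_congr fun x hx => ?_) fun _ _ => rfl
      constructor
      · rintro ⟨-, h⟩; exact ⟨Or.inl h, h⟩
      · rintro ⟨-, h⟩
        exact ⟨exists_hit n x (hble x hx) ⟨n, h⟩, h⟩
    · -- the reflected bijection x ↦ -(phi x)
      refine Finset.sum_bij' (i := fun x _ => fun i => - phi n x i)
        (j := fun y _ => phi n (fun i => - y i)) ?_ ?_ ?_ ?_ ?_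
      · intro x hx
        rw [Finset.mem_filter] at hx ⊢
        obtain ⟨hxE, hhit, hle⟩ := hx
        have hlast := psum_phi_last n x hhit
        have hneg := psum_neg n (phi n x) n
        exact ⟨hnegE _ (hphiE x hxE), Or.inr (by omega), by omega⟩
      · intro y hy
        rw [Finset.mem_filter] at hy ⊢
        obtain ⟨hyE, hor, hle⟩ := hy
        have h2 : 2 ≤ psum n (fun i => - y i) n := by
          rw [psum_neg]; omega
        have hhit : ∃ j, psum n (fun i => - y i) j = 1 :=
          exists_hit n _ (hble _ (hnegE y hyE)) ⟨n, by omega⟩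
        have hlast := psum_phi_last n (fun i => - y i) hhit
        rw [psum_neg] at hlast
        exact ⟨hphiE _ (hnegE y hyE), phi_hit n _ hhit, by omega⟩
      · intro x hx
        rw [Finset.mem_filter] at hx
        obtain ⟨hxE, hhit, hle⟩ := hx
        have h1 : (fun i => - - phi n x i) = phi n x := by
          funext i; simp
        calc phi n (fun i => - - phi n x i) = phi n (phi n x) := by rw [h1]
          _ = x := phi_invol n x hhit
      · intro y hy
        rw [Finset.mem_filter] at hy
        obtain ⟨hyE, hor, hle⟩ := hy
        have h2 : 2 ≤ psum n (fun i => - y i) n := by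
          rw [psum_neg]; omega
        have hhit : ∃ j, psum n (fun i => - y i) j = 1 :=
          exists_hit n _ (hble _ (hnegE y hyE)) ⟨n, by omega⟩
        have h1 := phi_invol n (fun i => - y i) hhit
        funext i
        have := congrFun h1 i
        omega
      · intro x hx
        rw [← hWphi x]
        exact (hWneg (phi n x)).symm
  -- put everything together
  have hcancel := split1.symm.trans split2
  rw [reflect] at hcancel
  exact (ENNReal.add_left_inj (hWne _)).1 hcancel


theorem meas_eq {Ω : Type*} [MeasureSpace Ω] [IsProbabilityMeasure (ℙ : Measure Ω)]
    (X : ℕ → Ω → ℤ) (hmeas : ∀ i, Measurable (X i))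
    (hindep : iIndepFun X ℙ)
    (w : ℤ → ℝ≥0∞)
    (hwX : ∀ i, ∀ k : ℤ, (k = -1 ∨ k = 0 ∨ k = 1) → ℙ {ω | X i ω = k} = w k)
    (hone : ∀ i, ℙ {ω | X i ω = -1 ∨ X i ω = 0 ∨ X i ω = 1} = 1)
    (n : ℕ) (p : (Fin n → ℤ) → Prop) [DecidablePred p] :
    ℙ {ω | p (fun i : Fin n => X i ω)}
      = ∑ x ∈ (Fintype.piFinset fun _ : Fin n => ({-1, 0, 1} : Finset ℤ)).filter p,
          ∏ i, w (x i) := by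
  classical
  set E : Finset (Fin n → ℤ) := Fintype.piFinset fun _ : Fin n => ({-1, 0, 1} : Finset ℤ)
    with hE
  have hmemE : ∀ x : Fin n → ℤ, x ∈ E ↔ ∀ i, x i = -1 ∨ x i = 0 ∨ x i = 1 := by
    intro x
    rw [hE, Fintype.mem_piFinset]
    simp [Finset.mem_insert]
  -- extension of a tuple to ℕ
  set ext : (Fin n → ℤ) → ℕ → ℤ := fun x i => if h : i < n then x ⟨i, h⟩ else 0 with hext
  -- cylinders
  set Cyl : (Fin n → ℤ) → Set Ω := fun x => ⋂ i ∈ Finset.range n, X i ⁻¹' {ext x i}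
    with hCyl
  have mem_Cyl : ∀ x (ω : Ω), ω ∈ Cyl x ↔ ∀ i ∈ Finset.range n, X i ω = ext x i := by
    intro x ω
    simp [hCyl, Set.mem_iInter]
  have cyl_meas : ∀ x, MeasurableSet (Cyl x) := by
    intro x
    exact MeasurableSet.biInter (Finset.range n).countable_toSet
      fun i _ => hmeas i (measurableSet_singleton _)
  have cyl_prob : ∀ x ∈ E, ℙ (Cyl x) = ∏ i : Fin n, w (x i) := by
    intro x hx
    rw [hCyl]
    rw [hindep.meas_biInter (S := Finset.range n)
      (s := fun i => X i ⁻¹' {ext x i})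
      (fun i _ => ⟨{ext x i}, measurableSet_singleton _, rfl⟩)]
    have h1 : ∀ i ∈ Finset.range n, ℙ (X i ⁻¹' {ext x i}) = w (ext x i) := by
      intro i hi
      rw [Finset.mem_range] at hi
      have : X i ⁻¹' {ext x i} = {ω | X i ω = ext x i} := by
        ext ω; simp
      rw [this, hwX i _ ?_]
      · rw [hext]
        simp only [dif_pos hi]
        exact (hmemE x).1 hx ⟨i, hi⟩
    rw [Finset.prod_congr rfl h1]
    have h2 : ∀ i : Fin n, w (x i) = (fun m => w (ext x m)) (i : ℕ) := by
      intro i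
      simp only [hext, dif_pos i.isLt]
    rw [Finset.prod_congr rfl fun i _ => h2 i]
    exact ((Fin.prod_univ_eq_prod_range (fun m => w (ext x m)) n)).symm
  -- the bad event is null
  set N : Set Ω := ⋃ i ∈ Finset.range n, {ω | ¬ (X i ω = -1 ∨ X i ω = 0 ∨ X i ω = 1)}
    with hN
  have hNnull : ℙ N = 0 := by
    rw [hN]
    refine measure_biUnion_null_iff (Finset.range n).countable_toSet |>.2 fun i _ => ?_
    have hGmeas : MeasurableSet {ω | X i ω = -1 ∨ X i ω = 0 ∨ X i ω = 1} := by
      have : {ω | X i ω = -1 ∨ X i ω = 0 ∨ X i ω = 1}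
          = X i ⁻¹' ({-1} ∪ ({0} ∪ {1})) := by
        ext ω; simp; tauto
      rw [this]
      exact hmeas i (((measurableSet_singleton _).union
        ((measurableSet_singleton _).union (measurableSet_singleton _))))
    have : {ω | ¬ (X i ω = -1 ∨ X i ω = 0 ∨ X i ω = 1)}
        = {ω | X i ω = -1 ∨ X i ω = 0 ∨ X i ω = 1}ᶜ := rfl
    rw [this, prob_compl_eq_zero_iff hGmeas]
    exact hone i
  -- the union of cylinders
  set U : Set Ω := ⋃ x ∈ E.filter p, Cyl x with hU
  have hUprob : ℙ U = ∑ x ∈ E.filter p, ℙ (Cyl x) := by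
    rw [hU]
    refine measure_biUnion_finset ?_ fun x _ => cyl_meas x
    intro x hx y hy hxy
    show Disjoint (Cyl x) (Cyl y)
    rw [Set.disjoint_left]
    intro ω hωx hωy
    apply hxy
    funext i
    have h1 := (mem_Cyl x ω).1 hωx i (Finset.mem_range.2 i.isLt)
    have h2 := (mem_Cyl y ω).1 hωy i (Finset.mem_range.2 i.isLt)
    have e1 : ext x (i : ℕ) = x i := by simp [hext, i.isLt]
    have e2 : ext y (i : ℕ) = y i := by simp [hext, i.isLt]
    rw [e1] at h1; rw [e2] at h2
    rw [← h1, ← h2]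
  have hsub1 : U ⊆ {ω | p (fun i : Fin n => X i ω)} := by
    intro ω hω
    rw [hU, Set.mem_iUnion₂] at hω
    obtain ⟨x, hx, hωx⟩ := hω
    rw [Finset.mem_filter] at hx
    have : (fun i : Fin n => X i ω) = x := by
      funext i
      have h1 := (mem_Cyl x ω).1 hωx i (Finset.mem_range.2 i.isLt)
      have e1 : ext x (i : ℕ) = x i := by simp [hext, i.isLt]
      rw [e1] at h1
      exact h1
    show p _
    rw [this]
    exact hx.2
  have hsub2 : {ω | p (fun i : Fin n => X i ω)} ⊆ U ∪ N := by
    intro ω hω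
    by_cases hωN : ω ∈ N
    · exact Or.inr hωN
    · refine Or.inl ?_
      rw [hN, Set.mem_iUnion₂] at hωN
      push_neg at hωN
      have hgood : ∀ i : Fin n, X i ω = -1 ∨ X i ω = 0 ∨ X i ω = 1 := by
        intro i
        have := hωN i (Finset.mem_range.2 i.isLt)
        simp at this
        tauto
      rw [hU, Set.mem_iUnion₂]
      refine ⟨fun i : Fin n => X i ω, ?_, ?_⟩
      · rw [Finset.mem_filter]
        exact ⟨(hmemE _).2 hgood, hω⟩
      · have goal : ∀ i ∈ Finset.range n, X i ω = ext (fun i : Fin n => X i ω) i := by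
          intro i hi
          rw [Finset.mem_range] at hi
          simp only [hext]
          rw [dif_pos hi]
        exact (mem_Cyl (fun i : Fin n => X i ω) ω).2 goal
  have hle1 : ℙ {ω | p (fun i : Fin n => X i ω)} ≤ ℙ U := by
    calc ℙ {ω | p (fun i : Fin n => X i ω)} ≤ ℙ (U ∪ N) := measure_mono hsub2
      _ ≤ ℙ U + ℙ N := measure_union_le _ _
      _ = ℙ U := by rw [hNnull, add_zero]
  have heq : ℙ {ω | p (fun i : Fin n => X i ω)} = ℙ U :=
    le_antisymm hle1 (measure_mono hsub1)
  rw [heq, hUprob]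
  exact Finset.sum_congr rfl fun x hx => cyl_prob x (Finset.mem_filter.1 hx).1


end LazyWalk

/-- For the lazy symmetric random walk `S` with i.i.d. steps taking values
`±1` with probability `r` each and `0` with probability `1 − 2r`, with running
maximum `M_n = max_{0 ≤ i ≤ n} S_i`, one has
`P(M_n = 0) = P(S_n = 0) + P(S_n = −1)`. -/
theorem lazy_walk_max_eq_zero
    (Ω : Type*) [MeasureSpace Ω] [IsProbabilityMeasure (ℙ : Measure Ω)]
    (r : ℝ) (hr : 0 ≤ r ∧ r ≤ 1 / 2)
    (X : ℕ → Ω → ℤ) (hmeas : ∀ i, Measurable (X i))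
    (hindep : iIndepFun X ℙ)
    (hp1 : ∀ i, ℙ {ω | X i ω = 1} = ENNReal.ofReal r)
    (hm1 : ∀ i, ℙ {ω | X i ω = -1} = ENNReal.ofReal r)
    (h0 : ∀ i, ℙ {ω | X i ω = 0} = ENNReal.ofReal (1 - 2 * r))
    (S : ℕ → Ω → ℤ) (hS : ∀ n ω, S n ω = ∑ i ∈ Finset.range n, X i ω)
    (M : ℕ → Ω → ℤ)
    (hM : ∀ n ω, M n ω = (Finset.range (n + 1)).sup'
      (Finset.nonempty_range_iff.mpr (Nat.succ_ne_zero n)) (fun i => S i ω))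
    (n : ℕ) :
    ℙ {ω | M n ω = 0} = ℙ {ω | S n ω = 0} + ℙ {ω | S n ω = -1} := by
  classical
  obtain ⟨hr0, hr2⟩ := hr
  set w : ℤ → ℝ≥0∞ := fun k => if k = 1 ∨ k = -1 then ENNReal.ofReal r
    else if k = 0 then ENNReal.ofReal (1 - 2 * r) else 0 with hwdef
  have hw : ∀ k : ℤ, w (-k) = w k := by
    intro k
    simp only [hwdef]
    split_ifs <;> first | rfl | omega
  have hw' : ∀ k : ℤ, w k ≠ ⊤ := by
    intro k
    simp only [hwdef]
    split_ifs <;> simp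
  have hwX : ∀ i, ∀ k : ℤ, (k = -1 ∨ k = 0 ∨ k = 1) → ℙ {ω | X i ω = k} = w k := by
    intro i k hk
    rcases hk with h | h | h <;> subst h <;> simp only [hwdef] <;> norm_num
    · exact hm1 i
    · exact h0 i
    · exact hp1 i
  have hone : ∀ i, ℙ {ω | X i ω = -1 ∨ X i ω = 0 ∨ X i ω = 1} = 1 := by
    intro i
    have hsplit : {ω | X i ω = -1 ∨ X i ω = 0 ∨ X i ω = 1}
        = {ω | X i ω = -1} ∪ ({ω | X i ω = 0} ∪ {ω | X i ω = 1}) := by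
      ext ω; simp [Set.mem_setOf_eq]
    have hmk : ∀ k : ℤ, MeasurableSet {ω | X i ω = k} := by
      intro k
      have : {ω | X i ω = k} = X i ⁻¹' {k} := by ext ω; simp
      rw [this]
      exact hmeas i (measurableSet_singleton _)
    have hd1 : Disjoint {ω | X i ω = (0 : ℤ)} {ω | X i ω = 1} := by
      rw [Set.disjoint_left]
      intro ω h1 h2
      simp only [Set.mem_setOf_eq] at h1 h2
      omega
    have hd2 : Disjoint {ω | X i ω = (-1 : ℤ)} ({ω | X i ω = 0} ∪ {ω | X i ω = 1}) := by
      rw [Set.disjoint_left]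
      intro ω h1 h2
      simp only [Set.mem_setOf_eq, Set.mem_union] at h1 h2
      omega
    rw [hsplit, measure_union hd2 ((hmk 0).union (hmk 1)), measure_union hd1 (hmk 1),
      hm1 i, h0 i, hp1 i, ← ENNReal.ofReal_add (by linarith) (by linarith),
      ← ENNReal.ofReal_add (by linarith) (by linarith),
      show r + (1 - 2 * r + r) = 1 by ring]
    norm_num
  have hSeq : ∀ j, j ≤ n → ∀ ω, S j ω = LazyWalk.psum n (fun i : Fin n => X i ω) j := by
    intro j hj ω
    have h1 : LazyWalk.psum n (fun i : Fin n => X i ω) j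
        = ∑ i ∈ Finset.range n, (fun m => if m < j then X m ω else 0) i :=
      Fin.sum_univ_eq_sum_range (fun m => if m < j then X m ω else 0) n
    have h2 : (Finset.range n).filter (fun m => m < j) = Finset.range j := by
      ext m
      simp only [Finset.mem_filter, Finset.mem_range]
      omega
    rw [hS, h1, ← Finset.sum_filter, h2]
  have hM0 : {ω | M n ω = 0}
      = {ω | (fun x : Fin n → ℤ => ∀ j ≤ n, LazyWalk.psum n x j ≤ 0)
          (fun i : Fin n => X i ω)} := by
    ext ω
    simp only [Set.mem_setOf_eq]
    rw [hM]
    constructor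
    · intro h j hj
      rw [← hSeq j hj ω]
      have := Finset.le_sup' (f := fun i => S i ω)
        (Finset.mem_range.2 (by omega : j < n + 1))
      omega
    · intro h
      have hS0 : S 0 ω = 0 := by rw [hS]; simp
      apply le_antisymm
      · apply Finset.sup'_le
        intro i hi
        rw [Finset.mem_range] at hi
        rw [hSeq i (by omega) ω]
        exact h i (by omega)
      · have := Finset.le_sup'
          (f := fun i => S i ω)
          (Finset.mem_range.2 (Nat.succ_pos n))
        rw [hS0] at this
        exact this
  have hB0 : {ω | S n ω = 0}
      = {ω | (fun x : Fin n → ℤ => LazyWalk.psum n x n = 0) (fun i : Fin n => X i ω)} := by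
    ext ω
    simp only [Set.mem_setOf_eq]
    rw [hSeq n le_rfl ω]
  have hB1 : {ω | S n ω = -1}
      = {ω | (fun x : Fin n → ℤ => LazyWalk.psum n x n = -1) (fun i : Fin n => X i ω)} := by
    ext ω
    simp only [Set.mem_setOf_eq]
    rw [hSeq n le_rfl ω]
  rw [hM0, hB0, hB1,
    LazyWalk.meas_eq X hmeas hindep w hwX hone n
      (fun x : Fin n → ℤ => ∀ j ≤ n, LazyWalk.psum n x j ≤ 0),
    LazyWalk.meas_eq X hmeas hindep w hwX hone n
      (fun x : Fin n → ℤ => LazyWalk.psum n x n = 0),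
    LazyWalk.meas_eq X hmeas hindep w hwX hone n
      (fun x : Fin n → ℤ => LazyWalk.psum n x n = -1)]
  exact LazyWalk.key n w hw hw'
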